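/- Let β > 0, a(s) = exp(−s^{−β}) for s ∈ (0,1), I(s) = ∫_s^1 t^{−1} exp(t^{−β}) dt, so that a'(s) = β s^{−β−1} exp(−s^{−β}). Then lim_{s→0} s·I(s)·a'(s) = 1. -/

import Mathlib

open Real Filter intervalIntegral

private lemma stmt14_int_f (β : ℝ) {u v : ℝ} (hu : 0 < u) (huv : u ≤ v) :
    IntervalIntegrable (fun t : ℝ => t⁻¹ * Real.exp (t ^ (-β)))
      MeasureTheory.volume u v := by
  apply ContinuousOn.intervalIntegrable
  have hsub : Set.uIcc u v ⊆ Set.Ioi (0:ℝ) := by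
    rw [Set.uIcc_of_le huv]; exact fun t ht => lt_of_lt_of_le hu ht.1
  exact (continuousOn_id.inv₀ (fun t ht => ne_of_gt (hsub ht))).mul
    (Real.continuous_exp.comp_continuousOn
      (continuousOn_id.rpow_const (fun t ht => Or.inl (ne_of_gt (hsub ht)))))

private lemma stmt14_int_g (β : ℝ) {u v : ℝ} (hu : 0 < u) (huv : u ≤ v) :
    IntervalIntegrable (fun t : ℝ => t ^ (-β - 1) * Real.exp (t ^ (-β)))
      MeasureTheory.volume u v := by
  apply ContinuousOn.intervalIntegrable
  have hsub : Set.uIcc u v ⊆ Set.Ioi (0:ℝ) := by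
    rw [Set.uIcc_of_le huv]; exact fun t ht => lt_of_lt_of_le hu ht.1
  exact (continuousOn_id.rpow_const (fun t ht => Or.inl (ne_of_gt (hsub ht)))).mul
    (Real.continuous_exp.comp_continuousOn
      (continuousOn_id.rpow_const (fun t ht => Or.inl (ne_of_gt (hsub ht)))))

private lemma stmt14_ftc (β : ℝ) (hβ : 0 < β) {u v : ℝ} (hu : 0 < u) (huv : u ≤ v) :
    ∫ t in u..v, t ^ (-β - 1) * Real.exp (t ^ (-β))
      = (Real.exp (u ^ (-β)) - Real.exp (v ^ (-β))) / β := by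
  have hsub : Set.uIcc u v ⊆ Set.Ioi (0:ℝ) := by
    rw [Set.uIcc_of_le huv]; exact fun t ht => lt_of_lt_of_le hu ht.1
  have key := intervalIntegral.integral_eq_sub_of_hasDerivAt
    (f := fun t : ℝ => -(Real.exp (t ^ (-β)) / β))
    (f' := fun t : ℝ => t ^ (-β - 1) * Real.exp (t ^ (-β)))
    (a := u) (b := v) ?_ (stmt14_int_g β hu huv)
  · rw [key]; ring
  · intro t ht
    have ht0 : 0 < t := hsub ht
    have h1 : HasDerivAt (fun x : ℝ => x ^ (-β)) (-β * t ^ (-β - 1)) t :=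
      Real.hasDerivAt_rpow_const (Or.inl ht0.ne')
    have h3 := (h1.exp.div_const β).neg
    convert h3 using 1
    · rfl
    field_simp

private lemma stmt14_upper_bd (β : ℝ) (hβ : 0 < β) {u v : ℝ} (hu : 0 < u) (huv : u ≤ v) :
    (∫ t in u..v, t⁻¹ * Real.exp (t ^ (-β)))
      ≤ v ^ β * ((Real.exp (u ^ (-β)) - Real.exp (v ^ (-β))) / β) := by
  have hmono : (∫ t in u..v, t⁻¹ * Real.exp (t ^ (-β)))
      ≤ ∫ t in u..v, v ^ β * (t ^ (-β - 1) * Real.exp (t ^ (-β))) := by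
    apply intervalIntegral.integral_mono_on huv (stmt14_int_f β hu huv)
      ((stmt14_int_g β hu huv).const_mul _)
    intro t ht
    have ht0 : 0 < t := lt_of_lt_of_le hu ht.1
    have hid : t⁻¹ = t ^ β * t ^ (-β - 1) := by
      rw [← Real.rpow_add ht0, show β + (-β - 1) = -1 by ring, Real.rpow_neg_one]
    rw [hid, mul_assoc]
    apply mul_le_mul_of_nonneg_right (Real.rpow_le_rpow ht0.le ht.2 hβ.le)
    positivity
  calc (∫ t in u..v, t⁻¹ * Real.exp (t ^ (-β)))
      ≤ ∫ t in u..v, v ^ β * (t ^ (-β - 1) * Real.exp (t ^ (-β))) := hmono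
    _ = v ^ β * ∫ t in u..v, t ^ (-β - 1) * Real.exp (t ^ (-β)) :=
        intervalIntegral.integral_const_mul _ _
    _ = v ^ β * ((Real.exp (u ^ (-β)) - Real.exp (v ^ (-β))) / β) := by
        rw [stmt14_ftc β hβ hu huv]

private lemma stmt14_lower_bd (β : ℝ) (hβ : 0 < β) {u v : ℝ} (hu : 0 < u) (huv : u ≤ v) :
    u ^ β * ((Real.exp (u ^ (-β)) - Real.exp (v ^ (-β))) / β)
      ≤ ∫ t in u..v, t⁻¹ * Real.exp (t ^ (-β)) := by
  have hmono : (∫ t in u..v, u ^ β * (t ^ (-β - 1) * Real.exp (t ^ (-β))))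
      ≤ ∫ t in u..v, t⁻¹ * Real.exp (t ^ (-β)) := by
    apply intervalIntegral.integral_mono_on huv
      ((stmt14_int_g β hu huv).const_mul _) (stmt14_int_f β hu huv)
    intro t ht
    have ht0 : 0 < t := lt_of_lt_of_le hu ht.1
    have hid : t⁻¹ = t ^ β * t ^ (-β - 1) := by
      rw [← Real.rpow_add ht0, show β + (-β - 1) = -1 by ring, Real.rpow_neg_one]
    rw [hid, mul_assoc]
    apply mul_le_mul_of_nonneg_right (Real.rpow_le_rpow hu.le ht.1 hβ.le)
    positivity
  calc u ^ β * ((Real.exp (u ^ (-β)) - Real.exp (v ^ (-β))) / β)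
      = u ^ β * ∫ t in u..v, t ^ (-β - 1) * Real.exp (t ^ (-β)) := by
        rw [stmt14_ftc β hβ hu huv]
    _ = ∫ t in u..v, u ^ β * (t ^ (-β - 1) * Real.exp (t ^ (-β))) :=
        (intervalIntegral.integral_const_mul _ _).symm
    _ ≤ _ := hmono

theorem stmt14 (β : ℝ) (hβ : 0 < β) :
    Tendsto
      (fun s : ℝ =>
        s * (∫ t in s..1, t⁻¹ * Real.exp (t ^ (-β))) *
          (β * s ^ (-β - 1) * Real.exp (-s ^ (-β))))
      (nhdsWithin 0 (Set.Ioi 0)) (nhds 1) := by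
  -- s^(-c) → ∞ as s → 0⁺, for c > 0
  have hpow_top : ∀ c : ℝ, 0 < c →
      Tendsto (fun s : ℝ => s ^ (-c)) (nhdsWithin 0 (Set.Ioi 0)) atTop := by
    intro c hc
    have h1 : Tendsto (fun s : ℝ => s ^ c) (nhdsWithin 0 (Set.Ioi 0))
        (nhdsWithin 0 (Set.Ioi 0)) := by
      apply tendsto_nhdsWithin_of_tendsto_nhds_of_eventually_within
      · have h := (Real.continuousAt_rpow_const 0 c (Or.inr hc.le)).tendsto
        rw [Real.zero_rpow hc.ne'] at h
        exact h.mono_left nhdsWithin_le_nhds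
      · filter_upwards [self_mem_nhdsWithin] with s hs
        exact Real.rpow_pos_of_pos hs c
    have h2 := h1.inv_tendsto_nhdsGT_zero
    apply h2.congr'
    filter_upwards [self_mem_nhdsWithin] with s hs
    simp only [Pi.inv_apply]
    rw [← Real.rpow_neg (le_of_lt hs)]
  have hy_top := hpow_top (β/2) (half_pos hβ)
  have hS_top := hpow_top β hβ
  -- lower and upper comparison functions
  set lo : ℝ → ℝ := fun s => 1 - Real.exp 1 * Real.exp (-s ^ (-β)) with hlo_def
  set up : ℝ → ℝ := fun s => (1 - s ^ (β/2))⁻¹ + s ^ (-β) * Real.exp (-s ^ (-(β/2)))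
    with hup_def
  have hlo_tendsto : Tendsto lo (nhdsWithin 0 (Set.Ioi 0)) (nhds 1) := by
    have hexp : Tendsto (fun s : ℝ => Real.exp (-s ^ (-β)))
        (nhdsWithin 0 (Set.Ioi 0)) (nhds 0) :=
      Real.tendsto_exp_atBot.comp (tendsto_neg_atTop_atBot.comp hS_top)
    have h : Tendsto (fun s : ℝ => 1 - Real.exp 1 * Real.exp (-s ^ (-β)))
        (nhdsWithin 0 (Set.Ioi 0)) (nhds (1 - Real.exp 1 * 0)) :=
      tendsto_const_nhds.sub (tendsto_const_nhds.mul hexp)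
    simpa using h
  have hup_tendsto : Tendsto up (nhdsWithin 0 (Set.Ioi 0)) (nhds 1) := by
    have hhalf : Tendsto (fun s : ℝ => s ^ (β/2)) (nhdsWithin 0 (Set.Ioi 0)) (nhds 0) := by
      have h := (Real.continuousAt_rpow_const 0 (β/2) (Or.inr (half_pos hβ).le)).tendsto
      rw [Real.zero_rpow (half_pos hβ).ne'] at h
      exact h.mono_left nhdsWithin_le_nhds
    have h1 : Tendsto (fun s : ℝ => (1 - s ^ (β/2))⁻¹)
        (nhdsWithin 0 (Set.Ioi 0)) (nhds 1) := by
      have := ((tendsto_const_nhds (x := (1:ℝ))).sub hhalf).inv₀ (by norm_num)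
      simpa using this
    have h2 : Tendsto (fun s : ℝ => s ^ (-β) * Real.exp (-s ^ (-(β/2))))
        (nhdsWithin 0 (Set.Ioi 0)) (nhds 0) := by
      have hcomp := (tendsto_pow_mul_exp_neg_atTop_nhds_zero 2).comp hy_top
      apply hcomp.congr'
      filter_upwards [self_mem_nhdsWithin] with s hs
      simp only [Function.comp_apply]
      congr 1
      rw [← Real.rpow_natCast (s ^ (-(β/2))) 2, ← Real.rpow_mul hs.le]
      norm_num
    have := h1.add h2
    simpa using this
  refine tendsto_of_tendsto_of_tendsto_of_le_of_le' hlo_tendsto hup_tendsto ?_ ?_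
  all_goals {
    filter_upwards [self_mem_nhdsWithin,
      (hy_top.eventually_ge_atTop 2),
      Ioo_mem_nhdsGT_of_mem (Set.mem_Ico.mpr ⟨le_refl (0:ℝ), zero_lt_one⟩)]
      with s hs0 h2 hs1'
    have hs0 : (0:ℝ) < s := hs0
    have hs1 : s < 1 := hs1'.2
    set y := s ^ (-(β/2)) with hy_def
    set S := s ^ (-β) with hS_def
    have hy0 : 0 < y := Real.rpow_pos_of_pos hs0 _
    have hS0 : 0 < S := Real.rpow_pos_of_pos hs0 _
    have hSy : S = y * y := by
      rw [hy_def, hS_def, ← Real.rpow_add hs0]; ring_nf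
    set A := S - y with hA_def
    have hA1 : 1 ≤ A := by rw [hA_def, hSy]; nlinarith
    have hA0 : 0 < A := lt_of_lt_of_le one_pos hA1
    set r := A ^ (-β⁻¹) with hr_def
    have hr0 : 0 < r := Real.rpow_pos_of_pos hA0 _
    have hrnegβ : r ^ (-β) = A := by
      rw [hr_def, ← Real.rpow_mul hA0.le]
      rw [show -β⁻¹ * -β = 1 by field_simp, Real.rpow_one]
    have hrβ : r ^ β = A⁻¹ := by
      rw [hr_def, ← Real.rpow_mul hA0.le]
      rw [show -β⁻¹ * β = -1 by field_simp, Real.rpow_neg_one]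
    have hr1 : r ≤ 1 := Real.rpow_le_one_of_one_le_of_nonpos hA1
      (by simp [le_of_lt (inv_pos.mpr hβ)])
    have hsr : s ≤ r := by
      have hAS : A ≤ S := by rw [hA_def]; linarith
      have := Real.rpow_le_rpow_of_nonpos hA0 hAS
        (by simp [le_of_lt (inv_pos.mpr hβ)] : -β⁻¹ ≤ 0)
      calc s = (s ^ (-β)) ^ (-β⁻¹) := by
              rw [← Real.rpow_mul hs0.le, show -β * -β⁻¹ = 1 by field_simp, Real.rpow_one]
        _ ≤ A ^ (-β⁻¹) := by rw [← hS_def]; exact this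
        _ = r := rfl
    -- integrals
    have hsplit := intervalIntegral.integral_add_adjacent_intervals
      (stmt14_int_f β hs0 hsr) (stmt14_int_f β hr0 hr1)
      (f := fun t : ℝ => t⁻¹ * Real.exp (t ^ (-β)))
    set I1 := ∫ t in s..r, t⁻¹ * Real.exp (t ^ (-β)) with hI1_def
    set I2 := ∫ t in r..1, t⁻¹ * Real.exp (t ^ (-β)) with hI2_def
    set Ifull := ∫ t in s..1, t⁻¹ * Real.exp (t ^ (-β)) with hIfull_def
    have hmul : s * s ^ (-β - 1) = S := by
      have h := Real.rpow_add hs0 1 (-β - 1)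
      rw [Real.rpow_one] at h
      rw [← h, show (1:ℝ) + (-β - 1) = -β by ring]
    have hΦ : s * Ifull * (β * s ^ (-β - 1) * Real.exp (-S))
        = β * S * Real.exp (-S) * Ifull := by
      rw [← hmul]; ring
    have hexp1 : Real.exp (-S) * Real.exp S = 1 := by
      rw [← Real.exp_add]; simp
    have hexp2 : Real.exp (-S) * Real.exp A = Real.exp (-y) := by
      rw [← Real.exp_add, hA_def]; ring_nf
    have hSs : S * s ^ β = 1 := by
      rw [hS_def, ← Real.rpow_add hs0]; simp
    first
    | -- lower bound goal : lo s ≤ expr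
      (show lo s ≤ s * Ifull * (β * s ^ (-β - 1) * Real.exp (-s ^ (-β)))
       rw [← hS_def, hΦ]
       have hlow := stmt14_lower_bd β hβ hs0 (le_of_lt hs1)
       rw [← hS_def, ← hIfull_def, Real.one_rpow] at hlow
       have hcoef : 0 ≤ β * S * Real.exp (-S) := by positivity
       have step := mul_le_mul_of_nonneg_left hlow hcoef
       have heq : β * S * Real.exp (-S) * (s ^ β * ((Real.exp S - Real.exp 1) / β))
           = (S * s ^ β) * (Real.exp (-S) * Real.exp S)
             - (S * s ^ β) * (Real.exp 1 * Real.exp (-S)) := by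
         field_simp
       rw [heq, hSs, hexp1] at step
       calc lo s = 1 - Real.exp 1 * Real.exp (-S) := by rw [hlo_def]
         _ = 1 * 1 - 1 * (Real.exp 1 * Real.exp (-S)) := by ring
         _ ≤ β * S * Real.exp (-S) * Ifull := step
       )
    | -- upper bound goal : expr ≤ up s
      (show s * Ifull * (β * s ^ (-β - 1) * Real.exp (-s ^ (-β))) ≤ up s
       rw [← hS_def, hΦ, ← hsplit]
       have hb1 := stmt14_upper_bd β hβ hs0 hsr
       rw [← hS_def, ← hI1_def, hrnegβ, hrβ] at hb1
       have hb2 := stmt14_upper_bd β hβ hr0 hr1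
       rw [hrnegβ, ← hI2_def, Real.one_rpow, Real.one_rpow] at hb2
       have hcoef : 0 ≤ β * S * Real.exp (-S) := by positivity
       have hsum : I1 + I2 ≤ A⁻¹ * ((Real.exp S - Real.exp A) / β)
           + 1 * ((Real.exp A - Real.exp 1) / β) := add_le_add hb1 hb2
       have step := mul_le_mul_of_nonneg_left hsum hcoef
       have heq : β * S * Real.exp (-S) * (A⁻¹ * ((Real.exp S - Real.exp A) / β)
             + 1 * ((Real.exp A - Real.exp 1) / β))
           = (S * A⁻¹) * (Real.exp (-S) * Real.exp S)
             - (S * A⁻¹) * (Real.exp (-S) * Real.exp A)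
             + S * (Real.exp (-S) * Real.exp A)
             - S * (Real.exp (-S) * Real.exp 1) := by
         field_simp; ring
       rw [heq, hexp1, hexp2] at step
       have hSA : S * A⁻¹ = (1 - s ^ (β/2))⁻¹ := by
         have hkey : (1 - s ^ (β/2)) * S = A := by
           rw [hA_def, hy_def, hS_def]
           have : s ^ (β/2) * s ^ (-β) = s ^ (-(β/2)) := by
             rw [← Real.rpow_add hs0]; ring_nf
           rw [sub_mul, one_mul, this]
         have hone : (0:ℝ) < 1 - s ^ (β/2) := by
           have := mul_pos hA0 (inv_pos.mpr hS0)
           calc (0:ℝ) < A * S⁻¹ := this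
             _ = 1 - s ^ (β/2) := by rw [← hkey]; field_simp
         rw [← hkey]
         field_simp
       have hfin : (S * A⁻¹) * 1 - (S * A⁻¹) * Real.exp (-y) + S * Real.exp (-y)
             - S * (Real.exp (-S) * Real.exp 1)
           ≤ S * A⁻¹ + S * Real.exp (-y) := by
         have p1 : 0 ≤ (S * A⁻¹) * Real.exp (-y) := by positivity
         have p2 : 0 ≤ S * (Real.exp (-S) * Real.exp 1) := by positivity
         linarith
       calc β * S * Real.exp (-S) * (I1 + I2) ≤ _ := step
         _ ≤ S * A⁻¹ + S * Real.exp (-y) := hfin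
         _ = up s := by rw [hup_def, hSA, hS_def, hy_def]
       )
  }
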